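/- arXiv:1711.07043 — 4 statements merged into one kernel-verified Lean document; each statement's English description precedes it below -/
import Mathlib

section
/- Let Λ be an artin algebra and X a contravariantly finite subcategory of mod-Λ containing all finitely generated projective Λ-modules and closed under syzygies. Then for every X_0 in X, the projective dimension of ζ^X_{X_0} as an object of mod-X is at most 1. Moreover, if X_0 is a finitely generated projective Λ-module, then ζ^X_{X_0} ≅ Hom(-,X_0)|_X is a projective object of mod-X. -/
/- Common setup: right modules over a ring are realized as left modules over the opposite
ring; `mod-X` (finitely presented additive functors on a subcategory `X` of `mod-Λ`) is
realized inside the abelian category of contravariant `AddCommGrp`-valued functors on `X`. -/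

open CategoryTheory CategoryTheory.Limits Opposite

universe u

noncomputable section

namespace RelAus

attribute [local instance] CategoryTheory.Abelian.hasFiniteBiproducts

/-- `N` is a direct summand of `M`. -/
def IsDirectSummand {C : Type*} [Category C] (N M : C) : Prop :=
  ∃ (i : N ⟶ M) (r : M ⟶ N), i ≫ r = 𝟙 N

/-- `M ∈ add Xbar`: `M` is a direct summand of a finite direct sum of copies of `Xbar`. -/
def InAdd {R : Type u} [Ring R] (Xbar M : ModuleCat.{u} R) : Prop :=
  ∃ n : ℕ, IsDirectSummand M (ModuleCat.of R (Fin n → Xbar))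

/-- `Xbar` is an additive generator of the class `𝒮` of modules: `𝒮 = add Xbar`. -/
def IsAddGen {R : Type u} [Ring R] (𝒮 : Set (ModuleCat.{u} R)) (Xbar : ModuleCat.{u} R) : Prop :=
  Xbar ∈ 𝒮 ∧ ∀ M : ModuleCat.{u} R, M ∈ 𝒮 ↔ InAdd Xbar M

/-- An object of an additive category is indecomposable if it is nonzero and in any biproduct
decomposition one of the two factors is zero. -/
def IsIndecObj {C : Type*} [Category C] [Preadditive C] [HasBinaryBiproducts C] (N : C) : Prop :=
  ¬ IsZero N ∧ ∀ A B : C, Nonempty (N ≅ A ⊞ B) → IsZero A ∨ IsZero B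

/-- The cardinality of the set of isomorphism classes of indecomposable direct summands
of the module `T`. -/
def numIndecSummands {R : Type u} [Ring R] (T : ModuleCat.{u} R) : Cardinal :=
  Cardinal.mk {q : _root_.Quotient (isIsomorphicSetoid (ModuleCat.{u} R)) //
    ∃ N : ModuleCat.{u} R, Quotient.mk (isIsomorphicSetoid _) N = q ∧
      IsIndecObj N ∧ IsDirectSummand N T}

/-- The cardinality of the set of isomorphism classes of indecomposable (finitely generated)
projective `R`-modules. -/
def numIndecProj (R : Type u) [Ring R] : Cardinal :=
  Cardinal.mk {q : _root_.Quotient (isIsomorphicSetoid (ModuleCat.{u} R)) //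
    ∃ N : ModuleCat.{u} R, Quotient.mk (isIsomorphicSetoid _) N = q ∧
      IsIndecObj N ∧ Projective N ∧ Module.Finite R N}

/-- `T` has projective dimension at most one: there is a short exact sequence
`0 → P₁ → P₀ → T → 0` with `P₁`, `P₀` projective. -/
def ModPdLeOne {R : Type u} [Ring R] (T : ModuleCat.{u} R) : Prop :=
  ∃ (P₁ P₀ : ModuleCat.{u} R) (i : P₁ ⟶ P₀) (p : P₀ ⟶ T) (w : i ≫ p = 0),
    Projective P₁ ∧ Projective P₀ ∧ (ShortComplex.mk i p w).ShortExact

/-- `T` has injective dimension at most one: there is a short exact sequence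
`0 → T → I₀ → I₁ → 0` with `I₀`, `I₁` injective. -/
def ModIdLeOne {R : Type u} [Ring R] (T : ModuleCat.{u} R) : Prop :=
  ∃ (I₀ I₁ : ModuleCat.{u} R) (i : T ⟶ I₀) (p : I₀ ⟶ I₁) (w : i ≫ p = 0),
    Injective I₀ ∧ Injective I₁ ∧ (ShortComplex.mk i p w).ShortExact

/-- `T` is rigid, i.e. `Ext¹_R(T,T) = 0`: every self-extension of `T` splits. -/
def ModRigid {R : Type u} [Ring R] (T : ModuleCat.{u} R) : Prop :=
  ∀ (E : ModuleCat.{u} R) (i : T ⟶ E) (p : E ⟶ T) (w : i ≫ p = 0),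
    (ShortComplex.mk i p w).ShortExact → Nonempty (ShortComplex.mk i p w).Splitting

/-- `T` is a tilting `R`-module: `pd T ≤ 1`, `Ext¹_R(T,T) = 0`, and the number of isomorphism
classes of indecomposable direct summands of `T` equals the number of isomorphism classes of
indecomposable projective `R`-modules. -/
structure IsTiltingModule {R : Type u} [Ring R] (T : ModuleCat.{u} R) : Prop where
  pd_le_one : ModPdLeOne T
  rigid : ModRigid T
  summands : numIndecSummands T = numIndecProj R

/-- `T` is a cotilting `R`-module: `id T ≤ 1`, `Ext¹_R(T,T) = 0`, and the same counting
condition as for tilting modules. -/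
structure IsCotiltingModule {R : Type u} [Ring R] (T : ModuleCat.{u} R) : Prop where
  id_le_one : ModIdLeOne T
  rigid : ModRigid T
  summands : numIndecSummands T = numIndecProj R

/-- `M` is a (finitely generated) Gorenstein projective `R`-module: `M` is a syzygy of a
totally acyclic complex of finitely generated projective modules, i.e. of an acyclic complex
`P` of projectives such that `Hom_R(P, Q)` is acyclic for every projective `Q`. -/
def IsGProj {R : Type u} [Ring R] (M : ModuleCat.{u} R) : Prop :=
  ∃ P : CochainComplex (ModuleCat.{u} R) ℤ,
    (∀ n, Projective (P.X n)) ∧ (∀ n, Module.Finite R (P.X n)) ∧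
    (∀ n, P.ExactAt n) ∧
    (∀ Q : ModuleCat.{u} R, Projective Q →
      ∀ n, (((preadditiveYoneda.obj Q).mapHomologicalComplex _).obj P.op).ExactAt n) ∧
    ∃ n : ℤ, Nonempty (M ≅ kernel (P.d n (n + 1)))

/-- The class of finitely generated Gorenstein projective `R`-modules.  Applied to `R = Λᵐᵒᵖ`
this is `Gprj-Λ`, the Gorenstein projective right `Λ`-modules. -/
def GprjSet (R : Type u) [Ring R] : Set (ModuleCat.{u} R) :=
  {M | Module.Finite R M ∧ IsGProj M}

/-- The category of finitely generated `R`-modules. -/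
abbrev fgMod (R : Type u) [Ring R] := ObjectProperty.FullSubcategory (fun M : ModuleCat.{u} R => Module.Finite R M)

/-- `M` is basic: no indecomposable module occurs twice in a direct sum decomposition. -/
def IsBasic {R : Type u} [Ring R] (M : ModuleCat.{u} R) : Prop :=
  ∀ (N A : ModuleCat.{u} R), IsIndecObj N → ¬ Nonempty (M ≅ (N ⊞ N) ⊞ A)

/-- Two rings are Morita equivalent if their categories of finitely generated modules are
equivalent.  Applied to the opposite rings, this says that the categories of finitely
generated right modules are equivalent. -/
def MoritaEq (R S : Type u) [Ring R] [Ring S] : Prop :=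
  Nonempty (fgMod R ≌ fgMod S)

/-- A ring `A` is right coherent: every finitely generated right ideal of `A` (i.e. left ideal
of `Aᵐᵒᵖ`) is finitely presented as a right `A`-module. -/
def RightCoherent (A : Type u) [Ring A] : Prop :=
  ∀ I : Ideal Aᵐᵒᵖ, I.FG → Module.FinitePresentation Aᵐᵒᵖ I

/-- `Λ` is an (Iwanaga-)Gorenstein ring of G-dimension one: the injective dimension of `Λ`
as a right module over itself and as a left module over itself are both equal to `1`. -/
def GorensteinDimOne (Λ : Type u) [Ring Λ] : Prop :=
  (ModIdLeOne (ModuleCat.of Λᵐᵒᵖ Λ) ∧ ¬ Injective (ModuleCat.of Λᵐᵒᵖ Λ)) ∧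
  (ModIdLeOne (ModuleCat.of Λ Λ) ∧ ¬ Injective (ModuleCat.of Λ Λ))

variable {Λ : Type u} [Ring Λ]

/-- The category of right `Λ`-modules, realized as left modules over `Λᵐᵒᵖ`. -/
abbrev RMod (Λ : Type u) [Ring Λ] := ModuleCat.{u} Λᵐᵒᵖ

/-- Given the end `ε : Q ⟶ Xbar` of a projective presentation of `Xbar`, the evaluation
`T = ζ^X_{Xbar}(Xbar)` of the intermediate extension at `Xbar`: concretely, it is the set of
endomorphisms of `Xbar` that factor through `ε`, which is a right ideal of
`Γ = End_Λ(Xbar)`, i.e. a `Γᵐᵒᵖ`-submodule of `Γ` (right `Γ`-modules being realized as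
`Γᵐᵒᵖ`-modules). -/
def zetaEvalSub {Q Xbar : RMod Λ} (ε : Q ⟶ Xbar) :
    Submodule (End Xbar)ᵐᵒᵖ (End Xbar) where
  carrier := {g : End Xbar | ∃ h : Xbar ⟶ Q, h ≫ ε = g}
  add_mem' := by
    rintro a b ⟨h₁, rfl⟩ ⟨h₂, rfl⟩
    exact ⟨h₁ + h₂, by simp [Preadditive.add_comp]⟩
  zero_mem' := ⟨0, by simp⟩
  smul_mem' := by
    rintro e g ⟨h, rfl⟩
    exact ⟨e.unop ≫ h, by simp [Category.assoc]⟩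

/-- `Xm` lies in `⊥Λ`, i.e. `Ext^i_Λ(Xm, Λ) = 0` for all `i ≥ 1`, where `Λ` is regarded as a
right module over itself. -/
def MemPerp [HasExt.{u+1} (RMod Λ)] (Xm : RMod Λ) : Prop :=
  ∀ i : ℕ, 1 ≤ i → ∀ x : Abelian.Ext Xm (ModuleCat.of Λᵐᵒᵖ Λ) i, x = 0

/-- The standing hypotheses on a class `𝒳` of right `Λ`-modules: it consists of modules
belonging to `mod-Λ` (described by the predicate `memP`), it is additively closed and closed
under direct summands (hence a full additive subcategory of `mod-Λ` closed under summands),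
it contains all the projective modules of `mod-Λ`, and it is contravariantly finite in
`mod-Λ`, i.e. every module in `mod-Λ` has a right `𝒳`-approximation. -/
structure GoodSub (memP : RMod Λ → Prop) (𝒳 : Set (RMod Λ)) : Prop where
  mem_mod : ∀ M ∈ 𝒳, memP M
  sum_mem : ∀ M N : RMod Λ, M ∈ 𝒳 → N ∈ 𝒳 → ModuleCat.of Λᵐᵒᵖ (M × N) ∈ 𝒳
  summand_mem : ∀ M N : RMod Λ, M ∈ 𝒳 → IsDirectSummand N M → N ∈ 𝒳
  proj_mem : ∀ P : RMod Λ, memP P → Projective P → P ∈ 𝒳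
  approx : ∀ M : RMod Λ, memP M → ∃ X₀ ∈ 𝒳, ∃ f : X₀ ⟶ M,
    ∀ X' ∈ 𝒳, ∀ g : X' ⟶ M, ∃ h : X' ⟶ X₀, h ≫ f = g

/-- `𝒳` is closed under syzygies: for every short exact sequence `0 → Ω → P → X' → 0` with
`X' ∈ 𝒳` and `P` a finitely generated projective module, `Ω ∈ 𝒳`. -/
def ClosedUnderSyzygies (𝒳 : Set (RMod Λ)) : Prop :=
  ∀ (Ω P X' : RMod Λ), X' ∈ 𝒳 → Projective P → Module.Finite Λᵐᵒᵖ P →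
    ∀ (i : Ω ⟶ P) (p : P ⟶ X') (w : i ≫ p = 0),
      (ShortComplex.mk i p w).ShortExact → Ω ∈ 𝒳

/-- `𝒳` is closed under submodules. -/
def ClosedUnderSubmodules (𝒳 : Set (RMod Λ)) : Prop :=
  ∀ (N X' : RMod Λ), X' ∈ 𝒳 → ∀ i : N ⟶ X', Mono i → N ∈ 𝒳

section FunctorCategory

variable (𝒳 : Set (RMod Λ))

/-- The subcategory `X`, as a full subcategory of the category of right `Λ`-modules. -/
abbrev XCat := ObjectProperty.FullSubcategory (fun M : RMod Λ => M ∈ 𝒳)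

/-- The ambient abelian category of contravariant `AddCommGrp`-valued functors on `X`;
`mod-X` is its full subcategory of finitely presented functors (see `FinPres`). -/
abbrev FunCat := (XCat 𝒳)ᵒᵖ ⥤ AddCommGrpCat.{u}

/-- The restricted Yoneda functor `M ↦ Hom_Λ(-, M)|_X`.  On an arbitrary module `M` it
gives `θ_ρ(M)`; on objects of `X` it gives the representable functors, which are exactly the
projective objects of `mod-X`. -/
def resY : RMod Λ ⥤ FunCat 𝒳 :=
  preadditiveYoneda ⋙
    (Functor.whiskeringLeft (XCat 𝒳)ᵒᵖ (RMod Λ)ᵒᵖ AddCommGrpCat.{u}).obj (ObjectProperty.ι _).op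

/-- `F` is a finitely presented functor on `X`, i.e. an object of `mod-X`: there is an exact
sequence `Hom(-,X₁)|_X ⟶ Hom(-,X₀)|_X ⟶ F ⟶ 0` with `X₁, X₀ ∈ 𝒳`. -/
def FinPres (F : FunCat 𝒳) : Prop :=
  ∃ (X₁ X₀ : RMod Λ) (_ : X₁ ∈ 𝒳) (_ : X₀ ∈ 𝒳) (d : X₁ ⟶ X₀),
    Nonempty (F ≅ cokernel ((resY 𝒳).map d))

/-- `F` vanishes on all projective `Λ`-modules, i.e. `F` lies in `mod₀-X`. -/
def Vanish0 (F : FunCat 𝒳) : Prop :=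
  ∀ P : XCat 𝒳, Projective P.obj → IsZero (F.obj (op P))

lemma resY_comp_zero {P Q M : RMod Λ} (d : P ⟶ Q) (ε : Q ⟶ M) (w : d ≫ ε = 0) :
    (resY 𝒳).map d ≫ (resY 𝒳).map ε = 0 := by
  ext Z g
  erw [comp_apply]
  show (_ ≫ d) ≫ ε = (0 : ((resY 𝒳).obj M).obj Z)
  erw [Category.assoc, w, comp_zero]
  rfl

/-- Given a projective presentation `P ⟶ Q ⟶ M ⟶ 0` of `M`, the canonical natural map
`γ_M : θ_λ(M) ⟶ θ_ρ(M)` induced by the identity of `M`, where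
`θ_λ(M) = coker(Hom(-,P)|_X → Hom(-,Q)|_X)` and `θ_ρ(M) = Hom(-,M)|_X`. -/
def gammaMap {P Q M : RMod Λ} (d : P ⟶ Q) (ε : Q ⟶ M) (w : d ≫ ε = 0) :
    cokernel ((resY 𝒳).map d) ⟶ (resY 𝒳).obj M :=
  cokernel.desc _ ((resY 𝒳).map ε) (resY_comp_zero 𝒳 d ε w)

/-- The intermediate extension `ζ^X_M := Im (γ_M)`. -/
def zetaObj {P Q M : RMod Λ} (d : P ⟶ Q) (ε : Q ⟶ M) (w : d ≫ ε = 0) : FunCat 𝒳 :=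
  image (gammaMap 𝒳 d ε w)

/-- The unit map `coker(Hom(-,X₁)|_X → Hom(-,X₀)|_X) ⟶ Hom(-, coker(X₁ → X₀))|_X`, i.e.
the unit `F ⟶ θ_ρ θ (F)` of the adjunction `(θ, θ_ρ)` evaluated on a functor presented by
`d' : X₁ ⟶ X₀`. -/
def unitMap {X₁ X₀ : RMod Λ} (d' : X₁ ⟶ X₀) :
    cokernel ((resY 𝒳).map d') ⟶ (resY 𝒳).obj (cokernel d') :=
  cokernel.desc _ ((resY 𝒳).map (cokernel.π d'))
    (resY_comp_zero 𝒳 d' (cokernel.π d') (cokernel.condition d'))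

/-- In `mod-X`, `F` has projective dimension at most one: there is a short exact sequence
`0 → Hom(-,X₁)|_X → Hom(-,X₀)|_X → F → 0` by representable functors (the projective objects
of `mod-X`). -/
def PdLeOne (F : FunCat 𝒳) : Prop :=
  ∃ (X₁ X₀ : RMod Λ) (_ : X₁ ∈ 𝒳) (_ : X₀ ∈ 𝒳) (a : (resY 𝒳).obj X₁ ⟶ (resY 𝒳).obj X₀)
    (b : (resY 𝒳).obj X₀ ⟶ F) (w : a ≫ b = 0), (ShortComplex.mk a b w).ShortExact

/-- `F` lies in `Ker ℓ_λ`, where `ℓ_λ` is the left adjoint of the inclusion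
`ℓ : mod₀-X → mod-X`; equivalently (by adjunction), `F` admits no nonzero morphism to any
object of `mod₀-X`. -/
def MemKerEllLambda (F : FunCat 𝒳) : Prop :=
  ∀ G : FunCat 𝒳, FinPres 𝒳 G → Vanish0 𝒳 G → ∀ η : F ⟶ G, η = 0

/-- `F` lies in `Ker ℓ_ρ`, where `ℓ_ρ` is the right adjoint of the inclusion
`ℓ : mod₀-X → mod-X`; equivalently (by adjunction), `F` receives no nonzero morphism from
any object of `mod₀-X`. -/
def MemKerEllRho (F : FunCat 𝒳) : Prop :=
  ∀ G : FunCat 𝒳, FinPres 𝒳 G → Vanish0 𝒳 G → ∀ η : G ⟶ F, η = 0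

/-- `F` is a projective object of `mod-X`: every epimorphism of `mod-X` onto `F`'s target
lifts. -/
def ProjRelModX (F : FunCat 𝒳) : Prop :=
  ∀ (G H : FunCat 𝒳), FinPres 𝒳 G → FinPres 𝒳 H → ∀ e : G ⟶ H, Epi e →
    ∀ f : F ⟶ H, ∃ g : F ⟶ G, g ≫ e = f

end FunctorCategory


section Auxiliary

variable {Λ : Type u} [Ring Λ] (𝒳 : Set (RMod Λ))

/-- The canonical lift of a transformation `τ : F ⟶ Hom(-,Q)|_X` killing `ε`
through `Hom(-, ker ε)|_X`. -/
def kerLift {Q M : RMod Λ} (ε : Q ⟶ M) {F : FunCat 𝒳} (τ : F ⟶ (resY 𝒳).obj Q)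
    (hτ : τ ≫ (resY 𝒳).map ε = 0) : F ⟶ (resY 𝒳).obj (kernel ε) where
  app W := AddCommGrpCat.ofHom (AddMonoidHom.mk'
    (fun x => kernel.lift ε (τ.app W x) (by
        have h := congrArg (fun (η : F ⟶ (resY 𝒳).obj M) => η.app W x) hτ
        exact h))
    (fun u v => by
        apply (cancel_mono (kernel.ι ε)).1
        erw [kernel.lift_ι]
        show τ.app W (u + v) =
          (kernel.lift ε (τ.app W u) _ + kernel.lift ε (τ.app W v) _) ≫ kernel.ι ε
        erw [Preadditive.add_comp, kernel.lift_ι, kernel.lift_ι, map_add]; rfl))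
  naturality := by
    intro W W' u
    ext x
    apply (cancel_mono (kernel.ι ε)).1
    have hnat : τ.app W' (F.map u x) =
        (ObjectProperty.ι (fun M => M ∈ 𝒳)).map u.unop ≫ τ.app W x :=
      congrArg (fun (p : F.obj W ⟶ ((resY 𝒳).obj Q).obj W') => p x) (τ.naturality u)
    show kernel.lift ε (τ.app W' (F.map u x)) _ ≫ kernel.ι ε =
      ((ObjectProperty.ι _).map u.unop ≫ kernel.lift ε (τ.app W x) _) ≫ kernel.ι ε
    erw [kernel.lift_ι, Category.assoc, kernel.lift_ι]
    exact hnat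

lemma kerLift_comp {Q M : RMod Λ} (ε : Q ⟶ M) {F : FunCat 𝒳} (τ : F ⟶ (resY 𝒳).obj Q)
    (hτ : τ ≫ (resY 𝒳).map ε = 0) :
    kerLift 𝒳 ε τ hτ ≫ (resY 𝒳).map (kernel.ι ε) = τ := by
  ext W x
  show kernel.lift ε (τ.app W x) _ ≫ kernel.ι ε = τ.app W x
  erw [kernel.lift_ι]

lemma mono_resY_map {M N : RMod Λ} (f : M ⟶ N) [Mono f] : Mono ((resY 𝒳).map f) := by
  haveI : ∀ W : (XCat 𝒳)ᵒᵖ, Mono (((resY 𝒳).map f).app W) := fun W =>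
    (AddCommGrpCat.mono_iff_injective _).2 (fun a b h => (cancel_mono f).1 h)
  exact NatTrans.mono_of_mono_app _

end Auxiliary



/-- If moreover `X` is closed under syzygies then `pd ζ^X_{X₀} ≤ 1` in `mod-X`;
and if `X₀` is projective, then `ζ^X_{X₀} ≅ Hom(-,X₀)|_X` is a projective object of
`mod-X`. -/
theorem statement3 (R₀ : Type u) [CommRing R₀] [IsArtinianRing R₀]
    (Λ : Type u) [Ring Λ] [Algebra R₀ Λ] [Module.Finite R₀ Λ]
    (𝒳 : Set (RMod Λ))
    (h𝒳 : GoodSub (fun M : RMod Λ => Module.Finite Λᵐᵒᵖ M) 𝒳)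
    (hsyz : ClosedUnderSyzygies 𝒳)
    (X₀ : RMod Λ) (hX₀ : X₀ ∈ 𝒳)
    (P Q : RMod Λ) (hP : Projective P) (hPf : Module.Finite Λᵐᵒᵖ P)
    (hQ : Projective Q) (hQf : Module.Finite Λᵐᵒᵖ Q)
    (d : P ⟶ Q) (ε : Q ⟶ X₀) (w : d ≫ ε = 0)
    (hepi : Epi ε) (hex : (ShortComplex.mk d ε w).Exact) :
    PdLeOne 𝒳 (zetaObj 𝒳 d ε w) ∧
      (Projective X₀ →
        Nonempty (zetaObj 𝒳 d ε w ≅ (resY 𝒳).obj X₀) ∧ ProjRelModX 𝒳 (zetaObj 𝒳 d ε w)) := by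
  haveI := hepi
  have hsesΛ : (ShortComplex.mk (kernel.ι ε) ε (kernel.condition ε)).ShortExact :=
    { exact := ShortComplex.exact_of_f_is_kernel _ (kernelIsKernel ε) }
  have hΩ : kernel ε ∈ 𝒳 :=
    hsyz (kernel ε) Q X₀ hX₀ hQ hQf (kernel.ι ε) ε (kernel.condition ε) hsesΛ
  have hQ𝒳 : Q ∈ 𝒳 := h𝒳.proj_mem Q hQf hQ
  set γ : cokernel ((resY 𝒳).map d) ⟶ (resY 𝒳).obj X₀ := gammaMap 𝒳 d ε w with hγ
  set a : (resY 𝒳).obj (kernel ε) ⟶ (resY 𝒳).obj Q := (resY 𝒳).map (kernel.ι ε) with ha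
  set b : (resY 𝒳).obj Q ⟶ image γ :=
    cokernel.π ((resY 𝒳).map d) ≫ factorThruImage γ with hb
  have hbι : b ≫ image.ι γ = (resY 𝒳).map ε := by
    rw [hb, Category.assoc, image.fac, hγ, gammaMap, cokernel.π_desc]
  haveI hmono : Mono a := mono_resY_map 𝒳 (kernel.ι ε)
  have hw : a ≫ b = 0 := by
    rw [← cancel_mono (image.ι γ), Category.assoc, hbι, zero_comp]
    exact resY_comp_zero 𝒳 (kernel.ι ε) ε (kernel.condition ε)
  haveI hepib : Epi b := by rw [hb]; exact epi_comp _ _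
  have hlim : IsLimit (KernelFork.ofι a hw) :=
    KernelFork.IsLimit.ofι' a hw (fun {A} k hk => by
      have hk' : k ≫ (resY 𝒳).map ε = 0 := by
        rw [← hbι, ← Category.assoc, hk, zero_comp]
      exact ⟨kerLift 𝒳 ε k hk', kerLift_comp 𝒳 ε k hk'⟩)
  have hse : (ShortComplex.mk a b hw).ShortExact :=
    { exact := ShortComplex.exact_of_f_is_kernel _ hlim }
  refine ⟨⟨kernel ε, Q, hΩ, hQ𝒳, a, b, hw, hse⟩, ?_⟩
  intro hX₀proj
  haveI := hX₀proj
  have hsε : Projective.factorThru (𝟙 X₀) ε ≫ ε = 𝟙 X₀ := Projective.factorThru_comp _ _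
  haveI : IsSplitEpi ((resY 𝒳).map ε) :=
    IsSplitEpi.mk' ⟨(resY 𝒳).map (Projective.factorThru (𝟙 X₀) ε), by
      rw [← Functor.map_comp, hsε, CategoryTheory.Functor.map_id]⟩
  haveI hγepi : Epi γ := by
    have h1 : Epi (cokernel.π ((resY 𝒳).map d) ≫ γ) := by
      rw [hγ, gammaMap, cokernel.π_desc]; infer_instance
    exact epi_of_epi (cokernel.π ((resY 𝒳).map d)) γ
  haveI : Epi (image.ι γ) := by
    have h2 : Epi (factorThruImage γ ≫ image.ι γ) := by rw [image.fac]; infer_instance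
    exact epi_of_epi (factorThruImage γ) (image.ι γ)
  haveI : IsIso (image.ι γ) := isIso_of_mono_of_epi _
  set ψ : image γ ≅ (resY 𝒳).obj X₀ := asIso (image.ι γ) with hψ
  refine ⟨⟨ψ⟩, ?_⟩
  intro G H hG hH e he f
  haveI := he
  obtain ⟨W₁, W₀, hW₁, hW₀, dG, ⟨φ⟩⟩ := hG
  set q : (resY 𝒳).obj W₀ ⟶ H := cokernel.π ((resY 𝒳).map dG) ≫ φ.inv ≫ e with hq
  haveI : Epi q := by rw [hq]; exact epi_comp _ _
  set Z : (XCat 𝒳)ᵒᵖ := op ⟨X₀, hX₀⟩ with hZ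
  haveI : Epi (q.app Z) := inferInstance
  obtain ⟨x, hx⟩ := (AddCommGrpCat.epi_iff_surjective (q.app Z)).1 inferInstance
    ((ψ.inv ≫ f).app Z (𝟙 X₀))
  have key : (resY 𝒳).map x ≫ q = ψ.inv ≫ f := by
    ext W y
    let yy : W.unop ⟶ Z.unop := ObjectProperty.homMk y
    have hnatq : q.app W (((resY 𝒳).obj W₀).map yy.op x) = H.map yy.op (q.app Z x) :=
      congrArg (fun (p : ((resY 𝒳).obj W₀).obj Z ⟶ H.obj W) => p x) (q.naturality yy.op)
    have hnatf : (ψ.inv ≫ f).app W (((resY 𝒳).obj X₀).map yy.op (𝟙 X₀)) =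
        H.map yy.op ((ψ.inv ≫ f).app Z (𝟙 X₀)) :=
      congrArg (fun (p : ((resY 𝒳).obj X₀).obj Z ⟶ H.obj W) => p (𝟙 X₀))
        ((ψ.inv ≫ f).naturality yy.op)
    show q.app W (((resY 𝒳).map x).app W y) = (ψ.inv ≫ f).app W y
    have e1 : ((resY 𝒳).map x).app W y = ((resY 𝒳).obj W₀).map yy.op x := rfl
    have e2 : ((resY 𝒳).obj X₀).map yy.op (𝟙 X₀) = y :=
      (Category.comp_id ((ObjectProperty.ι (fun M => M ∈ 𝒳)).map yy)).trans rfl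
    rw [e1]
    refine hnatq.trans ?_
    rw [hx]
    refine hnatf.symm.trans (congrArg ((ψ.inv ≫ f).app W) e2)
  refine ⟨ψ.hom ≫ (resY 𝒳).map x ≫ cokernel.π ((resY 𝒳).map dG) ≫ φ.inv, ?_⟩
  have hfin : (resY 𝒳).map x ≫ cokernel.π ((resY 𝒳).map dG) ≫ φ.inv ≫ e = ψ.inv ≫ f := by
    rw [← hq]; exact key
  change @Eq (image γ ⟶ H) ((ψ.hom ≫ (resY 𝒳).map x ≫ cokernel.π ((resY 𝒳).map dG) ≫ φ.inv) ≫ e) f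
  simp only [Category.assoc]
  rw [hfin]
  exact Iso.hom_inv_id_assoc ψ f

end RelAus
end
end

section
/- Let Λ be an artin algebra and X a contravariantly finite subcategory of mod-Λ containing all finitely generated projective Λ-modules and closed under submodules. Then for every M in mod-Λ, the projective dimension of the functor Hom_Λ(-,M)|_X as an object of mod-X is at most 1. -/
/- Common setup: right modules over a ring are realized as left modules over the opposite
ring; `mod-X` (finitely presented additive functors on a subcategory `X` of `mod-Λ`) is
realized inside the abelian category of contravariant `AddCommGrp`-valued functors on `X`. -/

open CategoryTheory CategoryTheory.Limits Opposite

universe u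

noncomputable section

namespace RelAus

attribute [local instance] CategoryTheory.Abelian.hasFiniteBiproducts

variable {Λ : Type u} [Ring Λ]

/-- If `X` is closed under submodules, then for every `M ∈ mod-Λ` the functor
`Hom_Λ(-,M)|_X` has projective dimension at most `1` in `mod-X`. -/
theorem statement4 (R₀ : Type u) [CommRing R₀] [IsArtinianRing R₀]
    (Λ : Type u) [Ring Λ] [Algebra R₀ Λ] [Module.Finite R₀ Λ]
    (𝒳 : Set (RMod Λ))
    (h𝒳 : GoodSub (fun M : RMod Λ => Module.Finite Λᵐᵒᵖ M) 𝒳)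
    (hsub : ClosedUnderSubmodules 𝒳)
    (M : RMod Λ) (hM : Module.Finite Λᵐᵒᵖ M) :
    PdLeOne 𝒳 ((resY 𝒳).obj M) := by
  obtain ⟨X₀, hX₀, f, hf⟩ := h𝒳.approx M hM
  have hK : (kernel f : RMod Λ) ∈ 𝒳 := hsub _ _ hX₀ (kernel.ι f) inferInstance
  refine ⟨kernel f, X₀, hK, hX₀, (resY 𝒳).map (kernel.ι f), (resY 𝒳).map f,
    resY_comp_zero 𝒳 _ _ (kernel.condition f), ?_⟩
  set S : ShortComplex (FunCat 𝒳) := ShortComplex.mk _ _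
    (resY_comp_zero 𝒳 (kernel.ι f) f (kernel.condition f)) with hS
  have hexactpt : ∀ X : (XCat 𝒳)ᵒᵖ,
      (S.map ((evaluation (XCat 𝒳)ᵒᵖ AddCommGrpCat.{u}).obj X)).Exact := by
    intro X
    rw [ShortComplex.ab_exact_iff]
    intro g hg
    have hg' : (g : X.unop.obj ⟶ X₀) ≫ f = 0 := hg
    exact ⟨kernel.lift f g hg', kernel.lift_ι f g hg'⟩
  haveI : Mono S.f := by
    haveI : ∀ X : (XCat 𝒳)ᵒᵖ, Mono (S.f.app X) := by
      intro X
      rw [AddCommGrpCat.mono_iff_injective]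
      intro g₁ g₂ h
      exact (cancel_mono (kernel.ι f)).1 h
    exact NatTrans.mono_of_mono_app _
  haveI : Epi S.g := by
    haveI : ∀ X : (XCat 𝒳)ᵒᵖ, Epi (S.g.app X) := by
      intro X
      rw [AddCommGrpCat.epi_iff_surjective]
      intro g
      obtain ⟨h, hh⟩ := hf X.unop.obj X.unop.property (g : X.unop.obj ⟶ M)
      exact ⟨h, hh⟩
    exact NatTrans.epi_of_epi_app _
  refine ⟨?_⟩
  rw [ShortComplex.exact_iff_isZero_homology]
  apply Functor.isZero
  intro X
  exact (Iso.isZero_iff (S.mapHomologyIso ((evaluation (XCat 𝒳)ᵒᵖ AddCommGrpCat.{u}).obj X))).1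
    ((ShortComplex.exact_iff_isZero_homology _).1 (hexactpt X))

end RelAus
end
end

section
/- Let Λ be an artin algebra and X a contravariantly finite subcategory of mod-Λ with prj-Λ ⊆ X ⊆ ⊥Λ, closed under submodules, and of finite type with X = add(X̄). Set Γ = Aus(X) and T = ζ^X_{X̄}(X̄). Then Ker L_ρ equals the class of finitely generated Γ-modules of projective dimension at most 1, and cogen(T) ⊆ Ker L_ρ; equivalently, in mod-X, Ker ℓ_ρ = {F : pd F ≤ 1} and every subobject of a finite direct sum of copies of ζ^X_{X̄} lies in Ker ℓ_ρ. -/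
/- Common setup: right modules over a ring are realized as left modules over the opposite
ring; `mod-X` (finitely presented additive functors on a subcategory `X` of `mod-Λ`) is
realized inside the abelian category of contravariant `AddCommGrp`-valued functors on `X`. -/

open CategoryTheory CategoryTheory.Limits Opposite

universe u

noncomputable section

namespace RelAus

attribute [local instance] CategoryTheory.Abelian.hasFiniteBiproducts

variable {Λ : Type u} [Ring Λ]

section Aux
variable {Λ : Type u} [Ring Λ] (𝒳 : Set (RMod Λ))

abbrev xObj (X' : RMod Λ) (hX' : X' ∈ 𝒳) : XCat 𝒳 := ⟨X', hX'⟩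

lemma resY_map_app {M N : RMod Λ} (f : M ⟶ N) (Z : (XCat 𝒳)ᵒᵖ)
    (g : ((resY 𝒳).obj M).obj Z) :
    ((resY 𝒳).map f).app Z g = (show Z.unop.obj ⟶ M from g) ≫ f := rfl

lemma resY_hom_ext {X' : RMod Λ} (hX' : X' ∈ 𝒳) {H : FunCat 𝒳}
    (η η' : (resY 𝒳).obj X' ⟶ H)
    (h : η.app (op (xObj 𝒳 X' hX')) (𝟙 X') = η'.app (op (xObj 𝒳 X' hX')) (𝟙 X')) :
    η = η' := by
  apply NatTrans.ext
  funext Z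
  induction Z using Opposite.rec with
  | op Zc =>
    ext g
    have key : ∀ (ν : (resY 𝒳).obj X' ⟶ H),
        ν.app (op Zc) g = H.map (ObjectProperty.homMk (X := Zc) (Y := xObj 𝒳 X' hX') (show Zc.obj ⟶ X' from g)).op
          (ν.app (op (xObj 𝒳 X' hX')) (𝟙 X')) := by
      intro ν
      have n1 := ConcreteCategory.congr_hom
        (ν.naturality (ObjectProperty.homMk (X := Zc) (Y := xObj 𝒳 X' hX') (show Zc.obj ⟶ X' from g)).op) (𝟙 X')
      have e0 : ((resY 𝒳).obj X').map (ObjectProperty.homMk (X := Zc) (Y := xObj 𝒳 X' hX') (show Zc.obj ⟶ X' from g)).op (𝟙 X') = g := by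
        show (show Zc.obj ⟶ X' from g) ≫ 𝟙 X' = g
        exact Category.comp_id _
      have n2 : ν.app (op Zc) (((resY 𝒳).obj X').map (ObjectProperty.homMk (X := Zc) (Y := xObj 𝒳 X' hX') (show Zc.obj ⟶ X' from g)).op (𝟙 X')) =
          H.map (ObjectProperty.homMk (X := Zc) (Y := xObj 𝒳 X' hX') (show Zc.obj ⟶ X' from g)).op (ν.app (op (xObj 𝒳 X' hX')) (𝟙 X')) := n1
      rw [e0] at n2
      exact n2
    rw [key η, key η', h]


lemma resY_map_eq_zero {X' M : RMod Λ} (hX' : X' ∈ 𝒳) {t : X' ⟶ M}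
    (h : (resY 𝒳).map t = 0) : t = 0 := by
  have h1 : ((resY 𝒳).map t).app (op (xObj 𝒳 X' hX')) (𝟙 X')
      = (0 : (resY 𝒳).obj X' ⟶ (resY 𝒳).obj M).app (op (xObj 𝒳 X' hX')) (𝟙 X') := by rw [h]
  have h2 : 𝟙 X' ≫ t = (0 : X' ⟶ M) := h1
  simpa using h2

lemma resY_map_zero {M N : RMod Λ} : (resY 𝒳).map (0 : M ⟶ N) = 0 := by
  ext Z g
  exact (comp_zero : (show Z.unop.obj ⟶ M from g) ≫ (0 : M ⟶ N) = 0)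

lemma resY_lift {X₀ Y₀ : RMod Λ} (hX₀ : X₀ ∈ 𝒳) {H : FunCat 𝒳}
    (u : (resY 𝒳).obj Y₀ ⟶ H) [Epi u] (c : (resY 𝒳).obj X₀ ⟶ H) :
    ∃ f : X₀ ⟶ Y₀, (resY 𝒳).map f ≫ u = c := by
  have hsurj : Function.Surjective (u.app (op (xObj 𝒳 X₀ hX₀))) := by
    rw [← AddCommGrpCat.epi_iff_surjective]
    infer_instance
  obtain ⟨f, hf⟩ := hsurj (c.app (op (xObj 𝒳 X₀ hX₀)) (𝟙 X₀))
  refine ⟨show X₀ ⟶ Y₀ from f, resY_hom_ext 𝒳 hX₀ _ _ ?_⟩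
  have e2 : (((resY 𝒳).map (show X₀ ⟶ Y₀ from f) ≫ u).app (op (xObj 𝒳 X₀ hX₀))) (𝟙 X₀)
      = u.app (op (xObj 𝒳 X₀ hX₀)) f := by
    show u.app (op (xObj 𝒳 X₀ hX₀))
        (((resY 𝒳).map (show X₀ ⟶ Y₀ from f)).app (op (xObj 𝒳 X₀ hX₀)) (𝟙 X₀)) = _
    congr 1
  rw [e2, hf]


lemma exists_epi_pres (h𝒳 : GoodSub (fun M : RMod Λ => Module.Finite Λᵐᵒᵖ M) 𝒳)
    {G : FunCat 𝒳} (hfp : FinPres 𝒳 G) (hv : Vanish0 𝒳 G) :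
    ∃ (X₁ X₀ : RMod Λ) (_ : X₁ ∈ 𝒳) (_ : X₀ ∈ 𝒳) (d' : X₁ ⟶ X₀),
      Function.Surjective d' ∧ Nonempty (G ≅ cokernel ((resY 𝒳).map d')) := by
  obtain ⟨X₁, X₀, hX₁, hX₀, d', ⟨e⟩⟩ := hfp
  have hfin : Module.Finite Λᵐᵒᵖ X₀ := h𝒳.mem_mod X₀ hX₀
  obtain ⟨n, π₀, hπ₀⟩ := Module.Finite.exists_fin' Λᵐᵒᵖ X₀
  set P₀ : RMod Λ := ModuleCat.of Λᵐᵒᵖ (Fin n → Λᵐᵒᵖ) with hP₀def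
  have hP₀proj : Projective P₀ := ModuleCat.projective_of_free (Pi.basisFun Λᵐᵒᵖ (Fin n))
  have hP₀ : P₀ ∈ 𝒳 := h𝒳.proj_mem P₀ (show Module.Finite Λᵐᵒᵖ (Fin n → Λᵐᵒᵖ) from inferInstance) hP₀proj
  have hz : IsZero (G.obj (op (xObj 𝒳 P₀ hP₀))) := hv _ hP₀proj
  have hz2 : IsZero ((cokernel ((resY 𝒳).map d')).obj (op (xObj 𝒳 P₀ hP₀))) :=
    hz.of_iso (e.app (op (xObj 𝒳 P₀ hP₀))).symm
  letI E := (evaluation (XCat 𝒳)ᵒᵖ AddCommGrpCat.{u}).obj (op (xObj 𝒳 P₀ hP₀))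
  have hz3 : IsZero (cokernel (((resY 𝒳).map d').app (op (xObj 𝒳 P₀ hP₀)))) :=
    hz2.of_iso (PreservesCokernel.iso E ((resY 𝒳).map d')).symm
  have hepi_app : Epi (((resY 𝒳).map d').app (op (xObj 𝒳 P₀ hP₀))) :=
    CategoryTheory.Abelian.epi_of_cokernel_π_eq_zero _ (hz3.eq_of_tgt _ _)
  have hsurj_app := (AddCommGrpCat.epi_iff_surjective _).mp hepi_app
  obtain ⟨h', hh'⟩ := hsurj_app (ModuleCat.ofHom π₀)
  let h'' : P₀ ⟶ X₁ := h'
  have hh'2 : h'' ≫ d' = (ModuleCat.ofHom π₀) := hh'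
  set X₁' : RMod Λ := ModuleCat.of Λᵐᵒᵖ (X₁ × P₀) with hX₁'def
  have hX₁' : X₁' ∈ 𝒳 := h𝒳.sum_mem X₁ P₀ hX₁ hP₀
  let d'' : X₁' ⟶ X₀ := ModuleCat.ofHom (LinearMap.coprod d'.hom π₀)
  have hd'h' : ∀ p : P₀, d' (h'' p) = π₀ p := fun p => ConcreteCategory.congr_hom hh'2 p
  have hsurj'' : Function.Surjective d'' := by
    intro y
    obtain ⟨p, hp⟩ := hπ₀ y
    refine ⟨(0, p), ?_⟩
    show d' 0 + π₀ p = y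
    simp [hp]
  let k : X₁' ⟶ X₁ := ModuleCat.ofHom (LinearMap.coprod LinearMap.id h''.hom)
  have hk : k ≫ (d' : X₁ ⟶ X₀) = d'' := by
    refine ModuleCat.hom_ext (LinearMap.ext fun xp => ?_)
    show d' (xp.1 + h'' xp.2) = d' xp.1 + π₀ xp.2
    rw [map_add, hd'h']
  let inl : X₁ ⟶ X₁' := ModuleCat.ofHom (LinearMap.inl Λᵐᵒᵖ X₁ P₀)
  have hinl : inl ≫ d'' = (d' : X₁ ⟶ X₀) := by
    ext x
    show d' x + π₀ 0 = d' x
    simp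
  have w1 : (resY 𝒳).map d'' ≫ cokernel.π ((resY 𝒳).map d') = 0 := by
    rw [← hk, Functor.map_comp, Category.assoc, cokernel.condition, comp_zero]
  have w2 : (resY 𝒳).map d' ≫ cokernel.π ((resY 𝒳).map d'') = 0 := by
    rw [← hinl, Functor.map_comp, Category.assoc, cokernel.condition, comp_zero]
  let φ : cokernel ((resY 𝒳).map d'') ⟶ cokernel ((resY 𝒳).map d') := cokernel.desc _ _ w1
  let ψ : cokernel ((resY 𝒳).map d') ⟶ cokernel ((resY 𝒳).map d'') := cokernel.desc _ _ w2
  have hψφ : ψ ≫ φ = 𝟙 _ := by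
    rw [← cancel_epi (cokernel.π ((resY 𝒳).map d'))]
    simp [φ, ψ]
  have hφψ : φ ≫ ψ = 𝟙 _ := by
    rw [← cancel_epi (cokernel.π ((resY 𝒳).map d''))]
    simp [φ, ψ]
  exact ⟨X₁', X₀, hX₁', hX₀, d'', hsurj'',
    ⟨e ≪≫ ⟨ψ, φ, hψφ, hφψ⟩⟩⟩


lemma memKerEllRho_of (h𝒳 : GoodSub (fun M : RMod Λ => Module.Finite Λᵐᵒᵖ M) 𝒳)
    {F : FunCat 𝒳}
    (hF : ∀ (X₁ X₀ : RMod Λ), X₁ ∈ 𝒳 → X₀ ∈ 𝒳 → ∀ d' : X₁ ⟶ X₀, Function.Surjective d' →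
      ∀ c : (resY 𝒳).obj X₀ ⟶ F, (resY 𝒳).map d' ≫ c = 0 → c = 0) :
    MemKerEllRho 𝒳 F := by
  intro G hfp hv η
  obtain ⟨X₁, X₀, hX₁, hX₀, d', hsurj, ⟨e⟩⟩ := exists_epi_pres 𝒳 h𝒳 hfp hv
  have h0 : cokernel.π ((resY 𝒳).map d') ≫ (e.inv ≫ η) = 0 := by
    apply hF X₁ X₀ hX₁ hX₀ d' hsurj
    rw [← Category.assoc, cokernel.condition, zero_comp]
  have h1 : e.inv ≫ η = 0 := by
    rw [← cancel_epi (cokernel.π ((resY 𝒳).map d')), comp_zero]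
    exact h0
  calc η = e.hom ≫ (e.inv ≫ η) := by simp
    _ = 0 := by rw [h1, comp_zero]

lemma zeta_memKerEllRho (h𝒳 : GoodSub (fun M : RMod Λ => Module.Finite Λᵐᵒᵖ M) 𝒳)
    {P Q Xb : RMod Λ} (d : P ⟶ Q) (ε : Q ⟶ Xb) (w : d ≫ ε = 0) :
    MemKerEllRho 𝒳 (zetaObj 𝒳 d ε w) := by
  apply memKerEllRho_of 𝒳 h𝒳
  intro X₁ X₀ hX₁ hX₀ d' hsurj c hc
  set γ := gammaMap 𝒳 d ε w with hγ
  set eQ : (resY 𝒳).obj Q ⟶ image γ :=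
    cokernel.π ((resY 𝒳).map d) ≫ factorThruImage γ with heQ
  have heQι : eQ ≫ image.ι γ = (resY 𝒳).map ε := by
    rw [heQ, Category.assoc, image.fac, hγ]
    exact cokernel.π_desc _ _ _
  haveI : Epi eQ := epi_comp _ _
  obtain ⟨q, hq⟩ := resY_lift 𝒳 hX₀ eQ c
  have h1 : (resY 𝒳).map d' ≫ (resY 𝒳).map q ≫ (resY 𝒳).map ε = 0 := by
    rw [← heQι]
    calc (resY 𝒳).map d' ≫ (resY 𝒳).map q ≫ eQ ≫ image.ι γ
        = ((resY 𝒳).map d' ≫ ((resY 𝒳).map q ≫ eQ)) ≫ image.ι γ := by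
          simp only [Category.assoc]
      _ = ((resY 𝒳).map d' ≫ c) ≫ image.ι γ := by rw [hq]; rfl
      _ = 0 := by rw [hc]; exact zero_comp
  have h2 : d' ≫ q ≫ ε = 0 := by
    apply resY_map_eq_zero 𝒳 hX₁
    rw [Functor.map_comp, Functor.map_comp]
    exact h1
  have h3 : q ≫ ε = 0 := by
    ext y
    obtain ⟨x, rfl⟩ := hsurj y
    have h5 := ConcreteCategory.congr_hom h2 x
    simpa using h5
  have h4 : (resY 𝒳).map q ≫ eQ = 0 := by
    rw [← cancel_mono (image.ι γ), Category.assoc, heQι, zero_comp,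
      ← Functor.map_comp, h3, resY_map_zero]
  rw [← hq]
  exact h4


lemma resY_map_inj {X' M : RMod Λ} (hX' : X' ∈ 𝒳) {t t' : X' ⟶ M}
    (h : (resY 𝒳).map t = (resY 𝒳).map t') : t = t' := by
  have h1 : ((resY 𝒳).map t).app (op (xObj 𝒳 X' hX')) (𝟙 X')
      = ((resY 𝒳).map t').app (op (xObj 𝒳 X' hX')) (𝟙 X') := by rw [h]
  have h2 : 𝟙 X' ≫ t = 𝟙 X' ≫ t' := h1
  simpa using h2

lemma memKerEllRho_of_pdLeOne (h𝒳 : GoodSub (fun M : RMod Λ => Module.Finite Λᵐᵒᵖ M) 𝒳)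
    {F : FunCat 𝒳} (hpd : PdLeOne 𝒳 F) :
    MemKerEllRho 𝒳 F := by
  obtain ⟨Y₁, Y₀, hY₁, hY₀, a, b, wab, hse⟩ := hpd
  apply memKerEllRho_of 𝒳 h𝒳
  intro X₁ X₀ hX₁ hX₀ d' hsurj c hc
  haveI := hse.epi_g
  haveI := hse.mono_f
  obtain ⟨f, hf⟩ := resY_lift 𝒳 hX₀ b c
  have hker : (resY 𝒳).map (d' ≫ f) ≫ b = 0 := by
    rw [Functor.map_comp, Category.assoc, hf, hc]
  obtain ⟨v, hv⟩ := KernelFork.IsLimit.lift' hse.fIsKernel ((resY 𝒳).map (d' ≫ f)) hker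
  have hv' : v ≫ a = (resY 𝒳).map (d' ≫ f) := by simpa using hv
  set α : Y₁ ⟶ Y₀ := a.app (op (xObj 𝒳 Y₁ hY₁)) (𝟙 Y₁) with hα
  have ha : a = (resY 𝒳).map α := by
    apply resY_hom_ext 𝒳 hY₁
    show α = 𝟙 Y₁ ≫ α
    simp
  set g : X₁ ⟶ Y₁ := v.app (op (xObj 𝒳 X₁ hX₁)) (𝟙 X₁) with hg
  have hvg : v = (resY 𝒳).map g := by
    apply resY_hom_ext 𝒳 hX₁
    show g = 𝟙 X₁ ≫ g
    simp
  have hga : g ≫ α = d' ≫ f := by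
    apply resY_map_inj 𝒳 hX₁
    rw [Functor.map_comp, ← hvg, ← ha, hv']
  have hker0 : ∀ y : Y₁, α y = 0 → y = 0 := by
    intro y hy
    set Λr : RMod Λ := ModuleCat.of Λᵐᵒᵖ Λᵐᵒᵖ with hΛrdef
    have hproj : Projective Λr :=
      ModuleCat.projective_of_free (Module.Basis.singleton PUnit.{u+1} Λᵐᵒᵖ)
    have hmem : Λr ∈ 𝒳 :=
      h𝒳.proj_mem Λr (show Module.Finite Λᵐᵒᵖ Λᵐᵒᵖ from inferInstance) hproj
    let t : Λr ⟶ Y₁ := ModuleCat.ofHom (LinearMap.toSpanSingleton Λᵐᵒᵖ Y₁ y)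
    haveI hm : Mono (((resY 𝒳).map α).app (op (xObj 𝒳 Λr hmem))) := by
      rw [← ha]; infer_instance
    have hinj := (AddCommGrpCat.mono_iff_injective _).mp hm
    have htz : t ≫ α = (0 : Λr ⟶ Y₁) ≫ α := by
      rw [zero_comp]
      refine ModuleCat.hom_ext (LinearMap.ext fun r => ?_)
      show α (r • y) = _
      rw [map_smul, hy, smul_zero]
      rfl
    have ht0 : t = (0 : Λr ⟶ Y₁) := hinj htz
    have h6 : t (1 : Λᵐᵒᵖ) = 0 := by rw [ht0]; rfl
    rw [show t (1 : Λᵐᵒᵖ) = y from one_smul Λᵐᵒᵖ y] at h6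
    exact h6
  have hcomm : ∀ x : X₁, α (g x) = f (d' x) := fun x => ConcreteCategory.congr_hom hga x
  have hKg : LinearMap.ker d'.hom ≤ LinearMap.ker g.hom := by
    intro x hx
    rw [LinearMap.mem_ker] at hx ⊢
    apply hker0
    rw [hcomm x, hx, map_zero]
  let e2 := LinearMap.quotKerEquivOfSurjective d'.hom hsurj
  let h : X₀ ⟶ Y₁ := ModuleCat.ofHom (
    ((LinearMap.ker d'.hom).liftQ g.hom hKg).comp
      (e2.symm.toLinearMap))
  have hd'h : ∀ x : X₁, h (d' x) = g x := by
    intro x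
    show ((LinearMap.ker d'.hom).liftQ g.hom hKg)
      (e2.symm (d' x)) = g x
    have he2 : e2.symm (d' x) = Submodule.Quotient.mk x := by
      rw [LinearEquiv.symm_apply_eq]
      rfl
    rw [he2, Submodule.liftQ_apply]
  have hfhα : f = (h : X₀ ⟶ Y₁) ≫ α := by
    ext x₀
    obtain ⟨x, rfl⟩ := hsurj x₀
    show f (d' x) = α (h (d' x))
    rw [hd'h x]
    exact (hcomm x).symm
  rw [← hf, hfhα, Functor.map_comp, Category.assoc, ← ha, wab, comp_zero]


lemma pdLeOne_of_memKerEllRho (hsub : ClosedUnderSubmodules 𝒳)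
    {F : FunCat 𝒳} (hfp : FinPres 𝒳 F) (hker : MemKerEllRho 𝒳 F) :
    PdLeOne 𝒳 F := by
  obtain ⟨X₁, X₀, hX₁, hX₀, d₀, ⟨e⟩⟩ := hfp
  set I : RMod Λ := ModuleCat.of Λᵐᵒᵖ (LinearMap.range d₀.hom) with hIdef
  let ι : I ⟶ X₀ := ModuleCat.ofHom (LinearMap.range d₀.hom).subtype
  let d₀' : X₁ ⟶ I := ModuleCat.ofHom d₀.hom.rangeRestrict
  have hfact : d₀' ≫ ι = d₀ := by ext x; rfl
  have hι_inj : Function.Injective ι := Submodule.injective_subtype _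
  haveI hιmono : Mono ι := (ModuleCat.mono_iff_injective ι).mpr hι_inj
  have hI : I ∈ 𝒳 := hsub I X₀ hX₀ ι hιmono
  have hd₀'surj : Function.Surjective d₀' := LinearMap.surjective_rangeRestrict _
  have hGfp : FinPres 𝒳 (cokernel ((resY 𝒳).map d₀')) := ⟨X₁, I, hX₁, hI, d₀', ⟨Iso.refl _⟩⟩
  have hGv : Vanish0 𝒳 (cokernel ((resY 𝒳).map d₀')) := by
    intro Pz hPz
    haveI : Epi (d₀' : X₁ ⟶ I) := (ModuleCat.epi_iff_surjective _).mpr hd₀'surj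
    haveI : Projective Pz.obj := hPz
    have happ_surj : Function.Surjective (((resY 𝒳).map d₀').app (op Pz)) := by
      intro gI
      let l : Pz.obj ⟶ X₁ := Projective.factorThru (show Pz.obj ⟶ I from gI) d₀'
      refine ⟨l, ?_⟩
      show l ≫ d₀' = gI
      exact Projective.factorThru_comp _ _
    haveI happ : Epi (((resY 𝒳).map d₀').app (op Pz)) :=
      (AddCommGrpCat.epi_iff_surjective _).mpr happ_surj
    letI E := (evaluation (XCat 𝒳)ᵒᵖ AddCommGrpCat.{u}).obj (op Pz)
    have hz : IsZero (cokernel (((resY 𝒳).map d₀').app (op Pz))) :=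
      (isZero_zero _).of_iso (cokernel.ofEpi _)
    exact hz.of_iso (PreservesCokernel.iso E ((resY 𝒳).map d₀'))
  have wη : (resY 𝒳).map d₀' ≫ ((resY 𝒳).map ι ≫ cokernel.π ((resY 𝒳).map d₀)) = 0 := by
    rw [← Category.assoc, ← Functor.map_comp, hfact, cokernel.condition]
  let η₀ : cokernel ((resY 𝒳).map d₀') ⟶ cokernel ((resY 𝒳).map d₀) := cokernel.desc _ _ wη
  have hη := hker _ hGfp hGv (η₀ ≫ e.inv)
  have hη₀ : η₀ = 0 := by
    have h7 : η₀ ≫ e.inv ≫ e.hom = 0 ≫ e.hom := by rw [← Category.assoc, hη, zero_comp]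
    simpa using h7
  have hιπ : (resY 𝒳).map ι ≫ cokernel.π ((resY 𝒳).map d₀) = 0 := by
    have h8 := cokernel.π_desc ((resY 𝒳).map d₀') _ wη
    rw [show cokernel.desc ((resY 𝒳).map d₀') _ wη = η₀ from rfl, hη₀, comp_zero] at h8
    exact h8.symm
  have wb : (resY 𝒳).map ι ≫ (cokernel.π ((resY 𝒳).map d₀) ≫ e.inv) = 0 := by
    rw [← Category.assoc, hιπ, zero_comp]
  refine ⟨I, X₀, hI, hX₀, (resY 𝒳).map ι, cokernel.π ((resY 𝒳).map d₀) ≫ e.inv, wb, ?_⟩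
  haveI hmono : Mono ((resY 𝒳).map ι) := by
    have : ∀ Z : (XCat 𝒳)ᵒᵖ, Mono (((resY 𝒳).map ι).app Z) := by
      intro Z
      rw [AddCommGrpCat.mono_iff_injective]
      intro g g' hgg
      have hgg' : (show Z.unop.obj ⟶ I from g) ≫ ι = (show Z.unop.obj ⟶ I from g') ≫ ι := hgg
      rwa [cancel_mono ι] at hgg'
    exact NatTrans.mono_of_mono_app _
  haveI hepi : Epi (cokernel.π ((resY 𝒳).map d₀) ≫ e.inv) := epi_comp _ _
  have hcolim : IsColimit (CokernelCofork.ofπ (cokernel.π ((resY 𝒳).map d₀) ≫ e.inv) wb) := by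
    refine CokernelCofork.IsColimit.ofπ _ _
      (fun {W} s hs => e.hom ≫ cokernel.desc _ s (by
        rw [← hfact, Functor.map_comp, Category.assoc, hs, comp_zero]))
      (fun {W} s hs => by simp)
      (fun {W} s hs m hm => by
        rw [← cancel_epi (cokernel.π ((resY 𝒳).map d₀) ≫ e.inv), hm]
        simp)
  exact { exact := ShortComplex.exact_of_g_is_cokernel _ hcolim, mono_f := hmono, epi_g := hepi }

end Aux


/-- in its `mod-X` form: `Ker ℓ_ρ` equals the class of finitely presented
functors of projective dimension at most `1`, and every (finitely presented) subobject of a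
finite direct sum of copies of `ζ^X_{Xbar}` lies in `Ker ℓ_ρ`. -/
theorem statement11 (R₀ : Type u) [CommRing R₀] [IsArtinianRing R₀]
    (Λ : Type u) [Ring Λ] [Algebra R₀ Λ] [Module.Finite R₀ Λ]
    [HasExt.{u+1} (RMod Λ)]
    (𝒳 : Set (RMod Λ))
    (h𝒳 : GoodSub (fun M : RMod Λ => Module.Finite Λᵐᵒᵖ M) 𝒳)
    (hperp : ∀ X' ∈ 𝒳, MemPerp X')
    (hsub : ClosedUnderSubmodules 𝒳)
    (Xbar : RMod Λ) (hgen : IsAddGen 𝒳 Xbar)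
    (P Q : RMod Λ) (hP : Projective P) (hPf : Module.Finite Λᵐᵒᵖ P)
    (hQ : Projective Q) (hQf : Module.Finite Λᵐᵒᵖ Q)
    (d : P ⟶ Q) (ε : Q ⟶ Xbar) (w : d ≫ ε = 0)
    (hepi : Epi ε) (hex : (ShortComplex.mk d ε w).Exact) :
    (∀ F : FunCat 𝒳, FinPres 𝒳 F → (MemKerEllRho 𝒳 F ↔ PdLeOne 𝒳 F)) ∧
    (∀ F : FunCat 𝒳, FinPres 𝒳 F →
      ∀ (n : ℕ) (ι : F ⟶ ⨁ (fun _ : Fin n => zetaObj 𝒳 d ε w)), Mono ι →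
        MemKerEllRho 𝒳 F) := by
  constructor
  · intro F hfp
    exact ⟨fun hker => pdLeOne_of_memKerEllRho 𝒳 hsub hfp hker,
      fun hpd => memKerEllRho_of_pdLeOne 𝒳 h𝒳 hpd⟩
  · intro F _ n ι hι
    intro G hGfp hGv η
    have hcomp : η ≫ ι = 0 := by
      apply biproduct.hom_ext
      intro j
      rw [Category.assoc, zero_comp]
      exact zeta_memKerEllRho 𝒳 h𝒳 d ε w G hGfp hGv (η ≫ ι ≫ biproduct.π _ j)
    haveI := hι
    rw [← cancel_mono ι, zero_comp]
    exact hcomp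

end RelAus
end
end

section
/- Let Λ be an artin algebra and X a contravariantly finite subcategory of mod-Λ containing all finitely generated projective Λ-modules, of finite type with X = add(X̄). Then ζ^X_{X̄} lies in Ker ℓ_λ, and for every F in mod-X the object θ_λ(θ(F)) is a quotient of an object of add(ζ^X_{X̄}), i.e. θ_λθ(F) ∈ gen(ζ^X_{X̄}) in mod-X. -/
/- Common setup: right modules over a ring are realized as left modules over the opposite
ring; `mod-X` (finitely presented additive functors on a subcategory `X` of `mod-Λ`) is
realized inside the abelian category of contravariant `AddCommGrp`-valued functors on `X`. -/

open CategoryTheory CategoryTheory.Limits Opposite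

universe u

noncomputable section

namespace RelAus

attribute [local instance] CategoryTheory.Abelian.hasFiniteBiproducts

variable {Λ : Type u} [Ring Λ]

section Aux

variable {Λ : Type u} [Ring Λ] (𝒳 : Set (RMod Λ))

/-- Any morphism from a representable (on an object of `𝒳` that is projective as a module)
to a functor vanishing on projectives is zero. -/
lemma hom_from_resY_proj_zero (G : FunCat 𝒳) (hGv : Vanish0 𝒳 G) (Q : RMod Λ)
    (hQmem : Q ∈ 𝒳) (hQ : Projective Q) (α : (resY 𝒳).obj Q ⟶ G) : α = 0 := by
  ext Z g
  let QX : XCat 𝒳 := ⟨Q, hQmem⟩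
  let gX : Z.unop ⟶ QX := ObjectProperty.homMk g
  have hz0 : IsZero (G.obj (op QX)) := hGv QX hQ
  have hid : (𝟙 (G.obj (op QX))) = 0 := hz0.eq_of_src _ _
  have hx : α.app (op QX) (𝟙 Q) = 0 := by
    have := congrArg (fun (f : G.obj (op QX) ⟶ G.obj (op QX)) => f (α.app (op QX) (𝟙 Q))) hid
    simpa using this
  have hnat := congrArg (fun (f : ((resY 𝒳).obj Q).obj (op QX) ⟶ G.obj Z) => f (𝟙 Q))
    (α.naturality gX.op)
  have hl : α.app Z (((resY 𝒳).obj Q).map gX.op (𝟙 Q)) = G.map gX.op (α.app (op QX) (𝟙 Q)) := hnat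
  have hmap : ((resY 𝒳).obj Q).map gX.op (𝟙 Q) = g := Category.comp_id (g : Z.unop.obj ⟶ Q)
  rw [hmap] at hl
  rw [hl, hx]
  simp

instance resY_additive : (resY 𝒳).Additive := by
  constructor
  intro A B f g
  ext Z h
  show (h : Z.unop.obj ⟶ A) ≫ (f + g) = ((resY 𝒳).map f + (resY 𝒳).map g).app Z h
  exact Preadditive.comp_add _ _ _ (h : Z.unop.obj ⟶ A) f g

end Aux


/-- For `X = add Xbar` contravariantly finite containing the projectives,
`ζ^X_{Xbar}` lies in `Ker ℓ_λ`, and for every `F ∈ mod-X` (presented by `d' : X₁ ⟶ X₀`,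
so that `θ(F) = coker d'`), the functor `θ_λ(θ(F))` is an epimorphic image of a finite
direct sum of copies of `ζ^X_{Xbar}`, i.e. `θ_λθ(F) ∈ gen(ζ^X_{Xbar})`. -/
theorem statement17 (R₀ : Type u) [CommRing R₀] [IsArtinianRing R₀]
    (Λ : Type u) [Ring Λ] [Algebra R₀ Λ] [Module.Finite R₀ Λ]
    (𝒳 : Set (RMod Λ))
    (h𝒳 : GoodSub (fun M : RMod Λ => Module.Finite Λᵐᵒᵖ M) 𝒳)
    (Xbar : RMod Λ) (hgen : IsAddGen 𝒳 Xbar)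
    (P Q : RMod Λ) (hP : Projective P) (hPf : Module.Finite Λᵐᵒᵖ P)
    (hQ : Projective Q) (hQf : Module.Finite Λᵐᵒᵖ Q)
    (d : P ⟶ Q) (ε : Q ⟶ Xbar) (w : d ≫ ε = 0)
    (hepi : Epi ε) (hex : (ShortComplex.mk d ε w).Exact) :
    MemKerEllLambda 𝒳 (zetaObj 𝒳 d ε w) ∧
    (∀ (X₁ X₀ : RMod Λ), X₁ ∈ 𝒳 → X₀ ∈ 𝒳 → ∀ (d' : X₁ ⟶ X₀)
      (P' Q' : RMod Λ), Projective P' → Module.Finite Λᵐᵒᵖ P' →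
        Projective Q' → Module.Finite Λᵐᵒᵖ Q' →
      ∀ (dF : P' ⟶ Q') (εF : Q' ⟶ cokernel d') (wF : dF ≫ εF = 0), Epi εF →
        (ShortComplex.mk dF εF wF).Exact →
        ∃ (n : ℕ) (e : (⨁ fun _ : Fin n => zetaObj 𝒳 d ε w) ⟶ cokernel ((resY 𝒳).map dF)),
          Epi e) := by
  constructor
  · intro G hGfp hGv η
    have hQmem : Q ∈ 𝒳 := h𝒳.proj_mem Q hQf hQ
    revert η
    show ∀ η : image (gammaMap 𝒳 d ε w) ⟶ G, η = 0
    intro η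
    rw [← cancel_epi (factorThruImage (gammaMap 𝒳 d ε w)),
      ← cancel_epi (cokernel.π ((resY 𝒳).map d))]
    have hz := hom_from_resY_proj_zero 𝒳 G hGv Q hQmem hQ
      (cokernel.π ((resY 𝒳).map d) ≫ factorThruImage (gammaMap 𝒳 d ε w) ≫ η)
    simp only [comp_zero]
    simpa [Category.assoc] using hz
  · intro X₁ X₀ hX₁ hX₀ d' P' Q' hP' hP'f hQ' hQ'f dF εF wF hepiF hexF
    haveI := hQ'
    haveI := hepi
    have hQ'mem : Q' ∈ 𝒳 := h𝒳.proj_mem Q' hQ'f hQ'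
    obtain ⟨n, i, r, hir⟩ := (hgen.2 Q').mp hQ'mem
    -- projections and inclusions for the product `Xbar^n`
    let pk : ∀ _ : Fin n, ModuleCat.of Λᵐᵒᵖ (Fin n → Xbar) ⟶ Xbar :=
      fun k => ModuleCat.ofHom (LinearMap.proj k)
    let sk : ∀ _ : Fin n, Xbar ⟶ ModuleCat.of Λᵐᵒᵖ (Fin n → Xbar) :=
      fun k => ModuleCat.ofHom (LinearMap.single Λᵐᵒᵖ (fun _ => Xbar) k)
    let ik : ∀ _ : Fin n, Q' ⟶ Xbar := fun k => i ≫ pk k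
    let rk : ∀ _ : Fin n, Xbar ⟶ Q' := fun k => sk k ≫ r
    have hmid : (∑ k : Fin n, pk k ≫ sk k) = 𝟙 (ModuleCat.of Λᵐᵒᵖ (Fin n → Xbar)) := by
      apply ModuleCat.hom_ext
      apply LinearMap.ext
      intro x
      have : ∀ k : Fin n, (pk k ≫ sk k).hom x = Pi.single k (x k) := fun k => rfl
      show (∑ k : Fin n, pk k ≫ sk k).hom x = x
      rw [ModuleCat.hom_sum, LinearMap.sum_apply]
      simp only [this]
      exact Finset.univ_sum_single x
    have hsum : (∑ k : Fin n, ik k ≫ rk k) = 𝟙 Q' := by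
      have h1 : (∑ k : Fin n, ik k ≫ rk k) = i ≫ (∑ k : Fin n, pk k ≫ sk k) ≫ r := by
        rw [Preadditive.sum_comp, Preadditive.comp_sum]
        simp [ik, rk, Category.assoc]
      rw [h1, hmid, Category.id_comp, hir]
    -- lifts of the `ik` through `ε`
    let lk : ∀ _ : Fin n, Q' ⟶ Q := fun k => Projective.factorThru (ik k) ε
    let ψ : (⨁ fun _ : Fin n => zetaObj 𝒳 d ε w) ⟶ (resY 𝒳).obj Q' :=
      biproduct.desc fun k => image.ι (gammaMap 𝒳 d ε w) ≫ (resY 𝒳).map (rk k)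
    let φ : (resY 𝒳).obj Q' ⟶ (⨁ fun _ : Fin n => zetaObj 𝒳 d ε w) :=
      biproduct.lift fun k =>
        (resY 𝒳).map (lk k) ≫ cokernel.π ((resY 𝒳).map d) ≫
          factorThruImage (gammaMap 𝒳 d ε w)
    have hφψ : φ ≫ ψ = 𝟙 ((resY 𝒳).obj Q') := by
      rw [biproduct.lift_desc]
      have hk : ∀ k : Fin n,
          ((resY 𝒳).map (lk k) ≫ cokernel.π ((resY 𝒳).map d) ≫
            factorThruImage (gammaMap 𝒳 d ε w)) ≫
            (image.ι (gammaMap 𝒳 d ε w) ≫ (resY 𝒳).map (rk k)) =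
          (resY 𝒳).map (ik k ≫ rk k) := by
        intro k
        have h1 : (resY 𝒳).map (lk k) ≫ cokernel.π ((resY 𝒳).map d) ≫
            gammaMap 𝒳 d ε w = (resY 𝒳).map (ik k) := by
          rw [gammaMap, cokernel.π_desc, ← Functor.map_comp,
            Projective.factorThru_comp]
        calc ((resY 𝒳).map (lk k) ≫ cokernel.π ((resY 𝒳).map d) ≫
              factorThruImage (gammaMap 𝒳 d ε w)) ≫
              (image.ι (gammaMap 𝒳 d ε w) ≫ (resY 𝒳).map (rk k))
            = ((resY 𝒳).map (lk k) ≫ cokernel.π ((resY 𝒳).map d) ≫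
              gammaMap 𝒳 d ε w) ≫ (resY 𝒳).map (rk k) := by
              simp only [Category.assoc, image.fac_assoc]
          _ = (resY 𝒳).map (ik k ≫ rk k) := by rw [h1, ← Functor.map_comp]
      erw [Finset.sum_congr rfl fun k _ => hk k]
      rw [← Functor.map_sum, hsum]
      exact (resY 𝒳).map_id Q'
    refine ⟨n, ψ ≫ cokernel.π ((resY 𝒳).map dF), ?_⟩
    haveI : Epi ψ := epi_of_epi_fac hφψ
    exact epi_comp _ _

end RelAus
end
end
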